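/- arXiv:1807.08404 — 2 statements merged into one kernel-verified Lean document; each statement's English description precedes it below -/
import Mathlib

section
/- Let u be twice continuously differentiable on (0,∞) with u' > 0 and u'' < 0, and γ(x) = -x u''(x)/u'(x). If lim_{x→∞} γ(x) = ∞, then for any κ ∈ (0,1), liminf_{x→∞} (u')^{-1}(κ u'(x)) / x = 1; in particular the bounded relative risk aversion conclusion fails. -/
open Filter

/-- Auxiliary decay estimate: if the relative risk aversion is at least `M` on `[x, ∞)`,
then `log u' + M log` is antitone there, in particular comparing `x` and `c*x`. -/
lemma decay_aux (u : ℝ → ℝ) (hu : ContDiffOn ℝ 2 u (Set.Ioi 0))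
    (hu' : ∀ x : ℝ, 0 < x → 0 < deriv u x)
    (M x c : ℝ) (hx : 0 < x) (hc : 1 < c)
    (hγ : ∀ t : ℝ, x ≤ t → M ≤ -t * deriv (deriv u) t / deriv u t) :
    Real.log (deriv u (c * x)) + M * Real.log (c * x) ≤
      Real.log (deriv u x) + M * Real.log x := by
  have hdiff : DifferentiableOn ℝ (deriv u) (Set.Ioi 0) :=
    (hu.deriv_of_isOpen (m := 1) isOpen_Ioi (by norm_num)).differentiableOn one_ne_zero
  have hderivAt : ∀ t : ℝ, 0 < t → HasDerivAt (deriv u) (deriv (deriv u) t) t := fun t ht =>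
    ((hdiff t ht).differentiableAt (isOpen_Ioi.mem_nhds ht)).hasDerivAt
  set f : ℝ → ℝ := fun t => Real.log (deriv u t) + M * Real.log t with hf
  have hsub : Set.Icc x (c * x) ⊆ Set.Ioi 0 := fun t ht => lt_of_lt_of_le hx ht.1
  have hf' : ∀ t : ℝ, 0 < t → HasDerivAt f
      (deriv (deriv u) t / deriv u t + M * t⁻¹) t := by
    intro t ht
    have h1 : HasDerivAt (fun s => Real.log (deriv u s))
        (deriv (deriv u) t / deriv u t) t :=
      (hderivAt t ht).log (ne_of_gt (hu' t ht))
    have h2 : HasDerivAt (fun s => M * Real.log s) (M * t⁻¹) t :=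
      (Real.hasDerivAt_log (ne_of_gt ht)).const_mul M
    exact h1.add h2
  have hcont : ContinuousOn f (Set.Icc x (c * x)) := by
    have hc1 : ContinuousOn (deriv u) (Set.Ioi (0:ℝ)) :=
      hu.continuousOn_deriv_of_isOpen isOpen_Ioi (by norm_num)
    refine ContinuousOn.add ?_ ?_
    · exact ContinuousOn.log (hc1.mono hsub) fun t ht => ne_of_gt (hu' t (hsub ht))
    · exact continuousOn_const.mul
        (Real.continuousOn_log.mono fun t ht => ne_of_gt (hsub ht))
  have hint : interior (Set.Icc x (c * x)) = Set.Ioo x (c * x) := interior_Icc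
  have hdf : DifferentiableOn ℝ f (interior (Set.Icc x (c * x))) := by
    rw [hint]
    intro t ht
    exact ((hf' t (lt_trans hx ht.1)).differentiableAt).differentiableWithinAt
  have hnonpos : ∀ t ∈ interior (Set.Icc x (c * x)), deriv f t ≤ 0 := by
    rw [hint]
    intro t ht
    have ht0 : 0 < t := lt_trans hx ht.1
    rw [(hf' t ht0).deriv]
    have hd1 : 0 < deriv u t := hu' t ht0
    have hγt := hγ t (le_of_lt ht.1)
    have hnum : M * deriv u t ≤ -t * deriv (deriv u) t := (le_div_iff₀ hd1).mp hγt
    have heq : deriv (deriv u) t / deriv u t + M * t⁻¹ =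
        (deriv (deriv u) t * t + deriv u t * M) / (deriv u t * t) := by
      field_simp
    rw [heq]
    apply div_nonpos_of_nonpos_of_nonneg
    · nlinarith
    · positivity
  have hanti : AntitoneOn f (Set.Icc x (c * x)) :=
    antitoneOn_of_deriv_nonpos (convex_Icc _ _) hcont hdf hnonpos
  have hxcx : x ≤ c * x := le_mul_of_one_le_left (le_of_lt hx) (le_of_lt hc)
  exact hanti (Set.left_mem_Icc.2 hxcx) (Set.right_mem_Icc.2 hxcx) hxcx

/-- If relative risk aversion `γ(x) = -x u''(x)/u'(x)` tends to infinity, then for any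
`κ ∈ (0,1)`, `liminf_{x→∞} (u')⁻¹(κ u'(x))/x = 1`, where `y x = (u')⁻¹(κ u'(x))`. -/
theorem stmt_12 (u : ℝ → ℝ) (hu : ContDiffOn ℝ 2 u (Set.Ioi 0))
    (hu' : ∀ x : ℝ, 0 < x → 0 < deriv u x)
    (hu'' : ∀ x : ℝ, 0 < x → deriv (deriv u) x < 0)
    (hγ : Tendsto (fun x => -x * deriv (deriv u) x / deriv u x) atTop atTop)
    (κ : ℝ) (hκ0 : 0 < κ) (hκ1 : κ < 1)
    (y : ℝ → ℝ) (hy : ∀ x : ℝ, 0 < x → 0 < y x ∧ deriv u (y x) = κ * deriv u x) :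
    Filter.liminf (fun x => y x / x) atTop = 1 := by
  -- u' is strictly decreasing on (0,∞)
  have hanti : StrictAntiOn (deriv u) (Set.Ioi 0) := by
    apply strictAntiOn_of_deriv_neg (convex_Ioi 0)
      (hu.continuousOn_deriv_of_isOpen isOpen_Ioi (by norm_num))
    intro t ht
    rw [interior_Ioi] at ht
    exact hu'' t ht
  -- y x > x for x > 0
  have hyx : ∀ x : ℝ, 0 < x → x < y x := by
    intro x hx
    by_contra h
    push_neg at h
    have heq := (hy x hx).2
    rcases lt_or_eq_of_le h with h | h
    · have := hanti (hy x hx).1 (Set.mem_Ioi.2 hx) h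
      nlinarith [hu' x hx]
    · rw [h] at heq; nlinarith [hu' x hx]
  -- eventually y x / x ≥ 1
  have hlb : ∀ᶠ x in atTop, (1:ℝ) ≤ y x / x := by
    filter_upwards [eventually_gt_atTop (0:ℝ)] with x hx
    exact (one_le_div hx).2 (le_of_lt (hyx x hx))
  -- key frequent claim
  have key : ∀ ε : ℝ, 0 < ε → ∃ᶠ x in atTop, y x / x ≤ 1 + ε := by
    intro ε hε
    by_contra hcon
    rw [not_frequently] at hcon
    set c : ℝ := 1 + ε with hcdef
    have hc : 1 < c := by simp [hcdef]; linarith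
    have hlogc : 0 < Real.log c := Real.log_pos hc
    set M : ℝ := (1 - Real.log κ) / Real.log c with hMdef
    obtain ⟨x₀, hx₀⟩ := (hγ.eventually_ge_atTop M).exists_forall_of_atTop
    obtain ⟨x, ⟨hxcon, hxx₀⟩, hx1⟩ :=
      ((hcon.and (eventually_ge_atTop x₀)).and (eventually_ge_atTop (1:ℝ))).exists
    have hx : (0:ℝ) < x := lt_of_lt_of_le one_pos hx1
    -- y x ≥ c * x
    have hycx : c * x ≤ y x := by
      push_neg at hxcon
      rw [lt_div_iff₀ hx] at hxcon
      linarith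
    -- u'(y x) ≤ u'(c x)
    have hcx0 : 0 < c * x := by positivity
    have hmono : deriv u (y x) ≤ deriv u (c * x) := by
      rcases eq_or_lt_of_le hycx with h | h
      · rw [h]
      · exact le_of_lt (hanti (Set.mem_Ioi.2 hcx0) (Set.mem_Ioi.2 (lt_trans hcx0 h)) h)
    -- decay estimate
    have hdec := decay_aux u hu hu' M x c hx hc (fun t ht => hx₀ t (le_trans hxx₀ ht))
    have hlogcx : Real.log (c * x) = Real.log c + Real.log x :=
      Real.log_mul (ne_of_gt (lt_trans one_pos hc)) (ne_of_gt hx)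
    have hMlogc : M * Real.log c = 1 - Real.log κ := div_mul_cancel₀ _ (ne_of_gt hlogc)
    -- κ u'(x) ≤ u'(c x), take logs
    have hκux : κ * deriv u x ≤ deriv u (c * x) := (hy x hx).2 ▸ hmono
    have hpos1 : 0 < κ * deriv u x := mul_pos hκ0 (hu' x hx)
    have hlog1 : Real.log (κ * deriv u x) ≤ Real.log (deriv u (c * x)) :=
      Real.log_le_log hpos1 hκux
    have hlog2 : Real.log (κ * deriv u x) = Real.log κ + Real.log (deriv u x) :=
      Real.log_mul (ne_of_gt hκ0) (ne_of_gt (hu' x hx))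
    rw [hlogcx] at hdec
    -- hdec : log u'(cx) + M (log c + log x) ≤ log u'(x) + M log x
    -- so log κ + log u'(x) ≤ log u'(cx) ≤ log u'(x) - M log c = log u'(x) - 1 + log κ
    nlinarith [hdec, hlog1, hlog2, hMlogc]
  -- conclude
  have hbdd : IsBoundedUnder (· ≥ ·) atTop (fun x => y x / x) := ⟨1, hlb⟩
  have h1 : (1:ℝ) ≤ liminf (fun x => y x / x) atTop :=
    le_liminf_of_le (IsCoboundedUnder.of_frequently_le ((key 1 one_pos))) hlb
  have h2 : liminf (fun x => y x / x) atTop ≤ 1 := by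
    by_contra hcon
    push_neg at hcon
    set L := liminf (fun x => y x / x) atTop with hL
    have hε : 0 < (L - 1) / 2 := by linarith
    have := liminf_le_of_frequently_le (key _ hε) hbdd
    rw [← hL] at this
    linarith
  linarith
end

section
/- Let {M_t}_{t≥0} be a nonnegative supermartingale with M_0 < ∞, and suppose M_t = (βR)^t u'(c_t) with βR > 1, u' > 0, and u'(x) → 0 as x → ∞ with u' strictly decreasing. Then M_t converges almost surely to a finite random variable M, and consequently u'(c_t) = (βR)^{-t} M_t → 0 almost surely, so c_t → ∞ almost surely. -/
open MeasureTheory Filter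

/-- Chamberlain–Wilson divergence: if `M_t = (βR)^t u'(c_t)` is a nonnegative supermartingale
with `M_0 < ∞`, `βR > 1`, `u' > 0` strictly decreasing with `u'(x) → 0` as `x → ∞`, then
`M_t` converges a.s. to a finite limit, hence `u'(c_t) → 0` a.s. and `c_t → ∞` a.s. -/
theorem stmt_19 {Ω : Type*} {m0 : MeasurableSpace Ω} (μ : Measure Ω) [IsProbabilityMeasure μ]
    (ℱ : Filtration ℕ m0) (M : ℕ → Ω → ℝ) (c : ℕ → Ω → ℝ)
    (u' : ℝ → ℝ) (β R : ℝ) (hβR : 1 < β * R)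
    (hu'pos : ∀ x : ℝ, 0 < u' x) (hu'anti : StrictAnti u')
    (hu'lim : Tendsto u' atTop (nhds 0))
    (hsuper : Supermartingale M ℱ μ)
    (hMnonneg : ∀ t ω, 0 ≤ M t ω)
    (hM : ∀ t ω, M t ω = (β * R) ^ t * u' (c t ω)) :
    ∃ Mlim : Ω → ℝ,
      (∀ᵐ ω ∂μ, Tendsto (fun t => M t ω) atTop (nhds (Mlim ω))) ∧
      (∀ᵐ ω ∂μ, Tendsto (fun t => u' (c t ω)) atTop (nhds 0)) ∧
      (∀ᵐ ω ∂μ, Tendsto (fun t => c t ω) atTop atTop) := by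
  -- L¹ bound for the supermartingale
  have hβRpos : (0 : ℝ) < β * R := lt_trans one_pos hβR
  have hbdd : ∀ n, eLpNorm (M n) 1 μ ≤ (∫ ω, M 0 ω ∂μ).toNNReal := by
    intro n
    have hint : Integrable (M n) μ := hsuper.integrable n
    have h1 : eLpNorm (M n) 1 μ = ENNReal.ofReal (∫ ω, M n ω ∂μ) := by
      rw [eLpNorm_one_eq_lintegral_enorm,
        ofReal_integral_eq_lintegral_ofReal hint (Filter.Eventually.of_forall (hMnonneg n))]
      congr 1
      ext ω
      rw [← Real.enorm_eq_ofReal (hMnonneg n ω)]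
    have h2 : ∫ ω, M n ω ∂μ ≤ ∫ ω, M 0 ω ∂μ := by
      have := hsuper.setIntegral_le (Nat.zero_le n) (MeasurableSet.univ)
      simpa [setIntegral_univ] using this
    rw [h1, ENNReal.ofReal]
    exact ENNReal.coe_le_coe.2 (Real.toNNReal_le_toNNReal h2)
  have hbdd' : ∀ n, eLpNorm ((-M) n) 1 μ ≤ (∫ ω, M 0 ω ∂μ).toNNReal := by
    intro n
    simpa [eLpNorm_neg] using hbdd n
  -- a.s. convergence via the submartingale -M
  have hsub : Submartingale (-M) ℱ μ := hsuper.neg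
  have hconv := hsub.ae_tendsto_limitProcess hbdd'
  refine ⟨fun ω => -(ℱ.limitProcess (-M) μ ω), ?_, ?_, ?_⟩
  · filter_upwards [hconv] with ω hω
    have := hω.neg
    simpa using this
  · filter_upwards [hconv] with ω hω
    have hMt : Tendsto (fun t => M t ω) atTop (nhds (-(ℱ.limitProcess (-M) μ ω))) := by
      simpa using hω.neg
    have hinv : Tendsto (fun t : ℕ => ((β * R)⁻¹) ^ t) atTop (nhds 0) := by
      apply tendsto_pow_atTop_nhds_zero_of_lt_one
      · exact inv_nonneg.2 hβRpos.le
      · exact inv_lt_one_of_one_lt₀ hβR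
    have : Tendsto (fun t => M t ω * ((β * R)⁻¹) ^ t) atTop (nhds 0) := by
      simpa using hMt.mul hinv
    refine this.congr fun t => ?_
    rw [hM t ω]
    rw [mul_right_comm, ← mul_pow, mul_inv_cancel₀ hβRpos.ne', one_pow, one_mul]
  · filter_upwards [hconv] with ω hω
    have hMt : Tendsto (fun t => M t ω) atTop (nhds (-(ℱ.limitProcess (-M) μ ω))) := by
      simpa using hω.neg
    have hinv : Tendsto (fun t : ℕ => ((β * R)⁻¹) ^ t) atTop (nhds 0) := by
      apply tendsto_pow_atTop_nhds_zero_of_lt_one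
      · exact inv_nonneg.2 hβRpos.le
      · exact inv_lt_one_of_one_lt₀ hβR
    have hu0 : Tendsto (fun t => u' (c t ω)) atTop (nhds 0) := by
      have : Tendsto (fun t => M t ω * ((β * R)⁻¹) ^ t) atTop (nhds 0) := by
        simpa using hMt.mul hinv
      refine this.congr fun t => ?_
      rw [hM t ω]
      rw [mul_right_comm, ← mul_pow, mul_inv_cancel₀ hβRpos.ne', one_pow, one_mul]
    rw [tendsto_atTop]
    intro b
    have hb : 0 < u' b := hu'pos b
    have := (hu0.eventually (eventually_lt_nhds hb))
    filter_upwards [this] with t ht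
    exact le_of_lt (lt_of_not_ge fun h => not_lt_of_ge (hu'anti.antitone h) ht)
end
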